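/- Define φ_ℓ(z) := ∫_{−1}^{1} P_ℓ(y)/(y+z) dy for z > 1. Then for every odd positive integer ℓ and every z > 1 one has φ_ℓ(z) < φ_{ℓ+2}(z) < 0; in particular φ₁(z) < φ₃(z) < φ₅(z) < ⋯ < 0. -/

import Mathlib

noncomputable section

/-- The `ℓ`-th Legendre polynomial via the Rodrigues formula. -/
def legendreP (l : ℕ) (y : ℝ) : ℝ :=
  (1 / ((2 : ℝ) ^ l * (Nat.factorial l : ℝ))) *
    iteratedDeriv l (fun t : ℝ => (t ^ 2 - 1) ^ l) y

/-- `φ_ℓ(z) = ∫_{−1}^{1} P_ℓ(y)/(y+z) dy` for `z > 1`. -/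
def phiL (l : ℕ) (z : ℝ) : ℝ :=
  ∫ y in (-1 : ℝ)..1, legendreP l y / (y + z)

namespace PhiLAux

open Polynomial MeasureTheory Set intervalIntegral

lemma iteratedDeriv_eval (p : ℝ[X]) (n : ℕ) :
    iteratedDeriv n (fun y : ℝ => p.eval y) = fun y => (derivative^[n] p).eval y := by
  induction n with
  | zero => simp
  | succ n ih =>
    rw [iteratedDeriv_succ, ih, Function.iterate_succ_apply']
    funext y
    exact Polynomial.deriv (p := derivative^[n] p)

lemma pl_ne_zero (l : ℕ) : ((X ^ 2 - C 1 : ℝ[X]) ^ l) ≠ 0 := by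
  apply pow_ne_zero
  intro h
  have := congrArg (Polynomial.eval (2 : ℝ)) h
  simp at this
  norm_num at this

lemma vanish (l j : ℕ) (hj : j < l) (t : ℝ) (ht : t = 1 ∨ t = -1) :
    (derivative^[j] ((X ^ 2 - C 1 : ℝ[X]) ^ l)).eval t = 0 := by
  have hdvd : (X - C t) ^ l ∣ ((X ^ 2 - C 1 : ℝ[X]) ^ l) := by
    apply pow_dvd_pow_of_dvd
    rw [dvd_iff_isRoot]
    rcases ht with h | h <;> simp [IsRoot, h]
  have hlt : j < rootMultiplicity t ((X ^ 2 - C 1 : ℝ[X]) ^ l) :=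
    lt_of_lt_of_le hj ((le_rootMultiplicity_iff (pl_ne_zero l)).mpr hdvd)
  exact isRoot_iterate_derivative_of_lt_rootMultiplicity hlt

lemma pos_on (z : ℝ) (hz : 1 < z) {y : ℝ} (hy : y ∈ Icc (-1 : ℝ) 1) : 0 < y + z := by
  have := hy.1; linarith

/-- Integration by parts step. -/
lemma step (q : ℝ[X]) (z : ℝ) (hz : 1 < z) (m : ℕ) (hm : 1 ≤ m)
    (h1 : q.eval 1 = 0) (h2 : q.eval (-1) = 0) :
    ∫ y in (-1 : ℝ)..1, (derivative q).eval y * (y + z) ^ (-(m : ℤ)) =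
      (m : ℝ) * ∫ y in (-1 : ℝ)..1, q.eval y * (y + z) ^ (-(m : ℤ) - 1) := by
  have hicc : Set.uIcc (-1 : ℝ) 1 = Icc (-1 : ℝ) 1 := by
    rw [uIcc_of_le]; norm_num
  have hne : ∀ y ∈ Icc (-1 : ℝ) 1, y + z ≠ 0 := fun y hy => (pos_on z hz hy).ne'
  -- continuity facts
  have hadd : Continuous fun y : ℝ => y + z := continuous_id.add continuous_const
  have hcv : ContinuousOn (fun y : ℝ => (y + z) ^ (-(m : ℤ))) (Icc (-1 : ℝ) 1) := by
    have : (fun y : ℝ => (y + z) ^ (-(m : ℤ))) = fun y => ((y + z) ^ m)⁻¹ := by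
      funext y; rw [zpow_neg, zpow_natCast]
    rw [this]
    exact ((hadd.pow m).continuousOn).inv₀ fun y hy => pow_ne_zero _ (hne y hy)
  have hcv' : ContinuousOn (fun y : ℝ => (-(m : ℤ) : ℝ) * (y + z) ^ (-(m : ℤ) - 1))
      (Icc (-1 : ℝ) 1) := by
    have : (fun y : ℝ => (-(m : ℤ) : ℝ) * (y + z) ^ (-(m : ℤ) - 1)) =
        fun y => (-(m : ℤ) : ℝ) * ((y + z) ^ (m + 1))⁻¹ := by
      funext y
      have : (-(m : ℤ) - 1) = -((m + 1 : ℕ) : ℤ) := by push_cast; ring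
      rw [this, zpow_neg, zpow_natCast]
    rw [this]
    exact continuousOn_const.mul
      (((hadd.pow (m + 1)).continuousOn).inv₀ fun y hy => pow_ne_zero _ (hne y hy))
  have hcu : ContinuousOn (fun y : ℝ => q.eval y) (Icc (-1 : ℝ) 1) :=
    (Polynomial.continuous q).continuousOn
  have hcu' : ContinuousOn (fun y : ℝ => (derivative q).eval y) (Icc (-1 : ℝ) 1) :=
    (Polynomial.continuous _).continuousOn
  have key := integral_deriv_mul_eq_sub_of_hasDerivAt (a := (-1 : ℝ)) (b := 1)
    (u := fun y => q.eval y) (v := fun y => (y + z) ^ (-(m : ℤ)))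
    (u' := fun y => (derivative q).eval y)
    (v' := fun y => (-(m : ℤ) : ℝ) * (y + z) ^ (-(m : ℤ) - 1))
    (by rw [hicc]; exact hcu) (by rw [hicc]; exact hcv)
    (fun x hx => Polynomial.hasDerivAt q x)
    (fun x hx => by
      have hx' : x + z ≠ 0 := by
        have : min (-1 : ℝ) 1 = -1 := by norm_num
        rw [this] at hx
        have : max (-1 : ℝ) 1 = 1 := by norm_num
        rw [this] at hx
        exact hne x ⟨hx.1.le, hx.2.le⟩
      have h1 : HasDerivAt (fun y : ℝ => y + z) 1 x := (hasDerivAt_id x).add_const z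
      have h2 := (hasDerivAt_zpow (-(m : ℤ)) (x + z) (Or.inl hx')).comp x h1
      simpa [Function.comp_def] using h2)
    (hcu'.intervalIntegrable_of_Icc (by norm_num))
    (hcv'.intervalIntegrable_of_Icc (by norm_num))
  simp only [h1, h2, mul_zero, zero_mul, sub_zero] at key
  have hsplit : ∫ y in (-1 : ℝ)..1,
      ((derivative q).eval y * (y + z) ^ (-(m : ℤ)) +
        q.eval y * ((-(m : ℤ) : ℝ) * (y + z) ^ (-(m : ℤ) - 1))) =
      (∫ y in (-1 : ℝ)..1, (derivative q).eval y * (y + z) ^ (-(m : ℤ))) +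
      ∫ y in (-1 : ℝ)..1, q.eval y * ((-(m : ℤ) : ℝ) * (y + z) ^ (-(m : ℤ) - 1)) := by
    apply intervalIntegral.integral_add
    · exact (hcu'.mul hcv).intervalIntegrable_of_Icc (by norm_num)
    · exact (hcu.mul hcv').intervalIntegrable_of_Icc (by norm_num)
  rw [hsplit] at key
  have : (∫ y in (-1 : ℝ)..1, q.eval y * ((-(m : ℤ) : ℝ) * (y + z) ^ (-(m : ℤ) - 1))) =
      -((m : ℝ) * ∫ y in (-1 : ℝ)..1, q.eval y * (y + z) ^ (-(m : ℤ) - 1)) := by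
    rw [← intervalIntegral.integral_const_mul]
    rw [← intervalIntegral.integral_neg]
    congr 1; funext y; push_cast; ring
  rw [this] at key
  linarith [key]

/-- Iterated integration by parts. -/
lemma ibp (l : ℕ) (z : ℝ) (hz : 1 < z) (k : ℕ) (hk : k ≤ l) :
    ∫ y in (-1 : ℝ)..1,
        (derivative^[k] ((X ^ 2 - C 1 : ℝ[X]) ^ l)).eval y * (y + z) ^ ((k : ℤ) - l - 1) =
      ((l.factorial : ℝ) / ((l - k).factorial : ℝ)) *
        ∫ y in (-1 : ℝ)..1, ((X ^ 2 - C 1 : ℝ[X]) ^ l).eval y * (y + z) ^ (-(l : ℤ) - 1) := by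
  induction k with
  | zero =>
    simp only [Function.iterate_zero, id_eq, Nat.cast_zero, zero_sub, Nat.sub_zero]
    rw [div_self (by exact_mod_cast (Nat.factorial_pos l).ne' : ((l.factorial : ℝ)) ≠ 0), one_mul]
  | succ k ih =>
    have hkl : k < l := hk
    have hstep := step (derivative^[k] ((X ^ 2 - C 1 : ℝ[X]) ^ l)) z hz (l - k)
      (by omega) (vanish l k hkl 1 (Or.inl rfl)) (vanish l k hkl (-1) (Or.inr rfl))
    rw [← Function.iterate_succ_apply' derivative] at hstep
    have he1 : (-(((l - k : ℕ) : ℤ))) = ((k + 1 : ℕ) : ℤ) - l - 1 := by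
      have : ((l - k : ℕ) : ℤ) = (l : ℤ) - k := by omega
      rw [this]; push_cast; ring
    have he2 : (-(((l - k : ℕ) : ℤ)) - 1) = ((k : ℕ) : ℤ) - l - 1 := by
      have : ((l - k : ℕ) : ℤ) = (l : ℤ) - k := by omega
      rw [this]; push_cast; ring
    rw [he2, he1] at hstep
    rw [hstep, ih (le_of_lt hkl)]
    have hfac : (l - k).factorial = (l - k) * (l - (k + 1)).factorial := by
      have : l - k = (l - (k + 1)) + 1 := by omega
      rw [this, Nat.factorial_succ]
    rw [hfac]
    have h1 : ((l - k : ℕ) : ℝ) ≠ 0 := by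
      have : 0 < l - k := by omega
      positivity
    have h2 : ((l - (k + 1)).factorial : ℝ) ≠ 0 := by
      exact_mod_cast (Nat.factorial_pos _).ne'
    push_cast
    field_simp

/-- The key identity: `φ_ℓ(z) = 2^{-ℓ} ∫ (y²-1)^ℓ/(y+z)^{ℓ+1}`. -/
lemma phiL_eq (l : ℕ) (z : ℝ) (hz : 1 < z) :
    phiL l z = (1 / 2 ^ l : ℝ) *
      ∫ y in (-1 : ℝ)..1, (y ^ 2 - 1) ^ l / (y + z) ^ (l + 1) := by
  have hfun : (fun t : ℝ => (t ^ 2 - 1) ^ l) =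
      fun y : ℝ => ((X ^ 2 - C 1 : ℝ[X]) ^ l).eval y := by
    funext y; simp
  have hibp := ibp l z hz l le_rfl
  simp only [Nat.sub_self, Nat.factorial_zero, Nat.cast_one, div_one] at hibp
  have hphi : phiL l z = (1 / ((2 : ℝ) ^ l * (l.factorial : ℝ))) *
      ∫ y in (-1 : ℝ)..1,
        (derivative^[l] ((X ^ 2 - C 1 : ℝ[X]) ^ l)).eval y * (y + z) ^ ((l : ℤ) - l - 1) := by
    rw [phiL, ← intervalIntegral.integral_const_mul]
    congr 1; funext y
    rw [legendreP, hfun, iteratedDeriv_eval]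
    have : ((l : ℤ) - l - 1) = -1 := by ring
    rw [this, zpow_neg, zpow_one]
    ring
  have hfac : (l.factorial : ℝ) ≠ 0 := by exact_mod_cast (Nat.factorial_pos _).ne'
  have hgen : ∀ t : ℝ, (1 / ((2 : ℝ) ^ l * (l.factorial : ℝ))) * ((l.factorial : ℝ) * t) =
      (1 / 2 ^ l : ℝ) * t := by
    intro t; field_simp
  rw [hphi, hibp, ← intervalIntegral.integral_const_mul, ← intervalIntegral.integral_const_mul,
    ← intervalIntegral.integral_const_mul]
  congr 1; funext y
  have : (-(l : ℤ) - 1) = -((l + 1 : ℕ) : ℤ) := by push_cast; ring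
  rw [this, zpow_neg, zpow_natCast, hgen]
  simp [div_eq_mul_inv]

lemma cont_integrand (l : ℕ) (z : ℝ) (hz : 1 < z) :
    ContinuousOn (fun y : ℝ => (y ^ 2 - 1) ^ l / (y + z) ^ (l + 1)) (Icc (-1 : ℝ) 1) := by
  apply ContinuousOn.div
  · exact (((continuous_id.pow 2).sub continuous_const).pow l).continuousOn
  · exact ((continuous_id.add continuous_const).pow (l + 1)).continuousOn
  · exact fun y hy => pow_ne_zero _ (pos_on z hz hy).ne'

end PhiLAux

open PhiLAux Set intervalIntegral

/-- For every odd positive integer `ℓ` and `z > 1` one has `φ_ℓ(z) < φ_{ℓ+2}(z) < 0`;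
in particular `φ₁(z) < φ₃(z) < φ₅(z) < ⋯ < 0`. -/
theorem phiL_odd_increasing_in_ell
    (l : ℕ) (hodd : Odd l) (hpos : 0 < l) (z : ℝ) (hz : 1 < z) :
    phiL l z < phiL (l + 2) z ∧ phiL (l + 2) z < 0 := by
  have hodd2 : Odd (l + 2) := by obtain ⟨m, rfl⟩ := hodd; exact ⟨m + 1, by ring⟩
  have hIl := phiL_eq l z hz
  have hIl2 := phiL_eq (l + 2) z hz
  set I : ℕ → ℝ := fun n => ∫ y in (-1 : ℝ)..1, (y ^ 2 - 1) ^ n / (y + z) ^ (n + 1) with hI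
  -- key pointwise facts
  have hbpos : ∀ y ∈ Icc (-1 : ℝ) 1, 0 < y + z := fun y hy => pos_on z hz hy
  -- φ_{l+2} < 0
  have hneg : I (l + 2) < 0 := by
    have h0 : (0 : ℝ) = ∫ y in (-1 : ℝ)..1, (0 : ℝ) := by simp
    rw [hI]
    calc (∫ y in (-1 : ℝ)..1, (y ^ 2 - 1) ^ (l + 2) / (y + z) ^ (l + 2 + 1))
        < ∫ y in (-1 : ℝ)..1, (0 : ℝ) := by
          apply integral_lt_integral_of_continuousOn_of_le_of_exists_lt (by norm_num)
            (cont_integrand (l + 2) z hz) continuousOn_const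
          · intro y hy
            have hy' : y ∈ Icc (-1 : ℝ) 1 := ⟨hy.1.le, hy.2⟩
            have hb : 0 < y + z := hbpos y hy'
            have hnum : (y ^ 2 - 1) ^ (l + 2) ≤ 0 := by
              apply Odd.pow_nonpos hodd2
              nlinarith [hy'.1, hy'.2]
            exact div_nonpos_iff.mpr (Or.inr ⟨hnum, (pow_pos hb _).le⟩)
          · refine ⟨0, by norm_num, ?_⟩
            have hb : (0 : ℝ) < 0 + z := by linarith
            have hnum : ((0 : ℝ) ^ 2 - 1) ^ (l + 2) < 0 := by
              apply Odd.pow_neg hodd2; norm_num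
            exact div_neg_of_neg_of_pos hnum (pow_pos hb _)
      _ = 0 := by simp
  -- 4 * I l < I (l + 2)
  have hmain : 4 * I l < I (l + 2) := by
    rw [hI]
    have h4 : (fun y : ℝ => 4 * ((y ^ 2 - 1) ^ l / (y + z) ^ (l + 1))) =
        fun y => (4 : ℝ) * ((y ^ 2 - 1) ^ l / (y + z) ^ (l + 1)) := rfl
    rw [show (4 : ℝ) * ∫ y in (-1 : ℝ)..1, (y ^ 2 - 1) ^ l / (y + z) ^ (l + 1) =
        ∫ y in (-1 : ℝ)..1, 4 * ((y ^ 2 - 1) ^ l / (y + z) ^ (l + 1)) from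
      (intervalIntegral.integral_const_mul 4 _).symm]
    apply integral_lt_integral_of_continuousOn_of_le_of_exists_lt (by norm_num)
      (continuousOn_const.mul (cont_integrand l z hz)) (cont_integrand (l + 2) z hz)
    · intro y hy
      have hy' : y ∈ Icc (-1 : ℝ) 1 := ⟨hy.1.le, hy.2⟩
      have hb : 0 < y + z := hbpos y hy'
      have ha : 0 ≤ 1 - y ^ 2 := by nlinarith [hy'.1, hy'.2]
      have hab : 1 - y ^ 2 < 2 * (y + z) := by nlinarith [hy'.1]
      have hrw : (y ^ 2 - 1 : ℝ) = -(1 - y ^ 2) := by ring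
      show 4 * ((y ^ 2 - 1) ^ l / (y + z) ^ (l + 1)) ≤ _
      rw [hrw, hodd.neg_pow, hodd2.neg_pow]
      rw [neg_div, neg_div, mul_neg, neg_le_neg_iff, ← mul_div_assoc]
      rw [div_le_div_iff₀ (pow_pos hb _) (pow_pos hb _)]
      have hexp1 : (1 - y ^ 2) ^ (l + 2) = (1 - y ^ 2) ^ l * (1 - y ^ 2) ^ 2 := by
        rw [← pow_add]
      have hexp2 : (y + z) ^ (l + 2 + 1) = (y + z) ^ (l + 1) * (y + z) ^ 2 := by
        rw [← pow_add]
      rw [hexp1, hexp2]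
      have hx : 0 ≤ (1 - y ^ 2) ^ l := pow_nonneg ha l
      have hyp : 0 < (y + z) ^ (l + 1) := pow_pos hb _
      nlinarith [mul_le_mul_of_nonneg_left
        (show (1 - y ^ 2) ^ 2 ≤ 4 * (y + z) ^ 2 by nlinarith) (mul_nonneg hx hyp.le)]
    · refine ⟨0, by norm_num, ?_⟩
      have hb : (0 : ℝ) < 0 + z := by linarith
      have hz2 : (1 : ℝ) < z ^ 2 := by nlinarith
      show 4 * (((0 : ℝ) ^ 2 - 1) ^ l / (0 + z) ^ (l + 1)) < _
      rw [show ((0 : ℝ) ^ 2 - 1) = -1 by norm_num, hodd.neg_pow, hodd2.neg_pow]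
      simp only [one_pow, zero_add]
      have hb' : (0 : ℝ) < z := by linarith
      rw [neg_div, neg_div, mul_neg, neg_lt_neg_iff, ← mul_div_assoc]
      rw [div_lt_div_iff₀ (pow_pos hb' _) (pow_pos hb' _)]
      have hzz : z ^ (l + 2 + 1) = z ^ (l + 1) * z ^ 2 := by rw [← pow_add]
      rw [hzz]
      have hzp : 0 < z ^ (l + 1) := pow_pos hb' _
      nlinarith
  constructor
  · rw [hIl, hIl2]
    have h2 : (1 / 2 ^ (l + 2) : ℝ) > 0 := by positivity
    have heq : (1 / 2 ^ l : ℝ) * I l = (1 / 2 ^ (l + 2) : ℝ) * (4 * I l) := by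
      rw [pow_add]; ring
    rw [heq]
    exact mul_lt_mul_of_pos_left hmain h2
  · rw [hIl2]
    have h2 : (1 / 2 ^ (l + 2) : ℝ) > 0 := by positivity
    exact mul_neg_of_pos_of_neg h2 hneg

end
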